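/- Let G be a tree with n vertices and matching number m, where 2 ≤ m ≤ ⌊n/2⌋. Then W(G) ≥ n² + (m−3)n − 3m + 4. -/

import Mathlib

open SimpleGraph Finset

/-- The Wiener index of a graph: the sum of distances over all unordered pairs
of distinct vertices (computed as half the sum over ordered pairs). -/
noncomputable def wienerIndex {V : Type*} [Fintype V] (G : SimpleGraph V) : ℕ :=
  (∑ u : V, ∑ v : V, G.dist u v) / 2

/-- The matching number of a graph: maximum number of edges of a matching. -/
noncomputable def matchingNumber {V : Type*} [Fintype V] (G : SimpleGraph V) : ℕ :=
  sSup {k : ℕ | ∃ M : G.Subgraph, M.IsMatching ∧ M.edgeSet.ncard = k}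

/-- A graph is unicyclic if it is connected and has as many edges as vertices. -/
def IsUnicyclic {V : Type*} [Fintype V] (G : SimpleGraph V) : Prop :=
  G.Connected ∧ G.edgeSet.ncard = Fintype.card V

/-- `G3Graph a j` : a triangle on vertices `0,1,2`, a path with `j` edges attached to
vertex `2` (vertices `2,3,…,j+2`), and `a` pendant vertices attached to vertex `j+2`. -/
def G3Graph (a j : ℕ) : SimpleGraph (Fin (a + j + 3)) :=
  SimpleGraph.fromRel (fun u v =>
    (u.val = 0 ∧ v.val = 1) ∨ (u.val = 0 ∧ v.val = 2) ∨ (u.val = 1 ∧ v.val = 2) ∨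
    (2 ≤ u.val ∧ u.val ≤ j + 1 ∧ v.val = u.val + 1) ∨
    (u.val = j + 2 ∧ j + 3 ≤ v.val))

/-- `G3Graph4 a b c j` : a triangle on vertices `0,1,2`, a path with `j` edges attached to
vertex `2` ending in a star with `a` leaves, `b` pendant vertices attached to vertex `0`,
and `c` pendant vertices attached to vertex `1`. -/
def G3Graph4 (a b c j : ℕ) : SimpleGraph (Fin (a + b + c + j + 3)) :=
  SimpleGraph.fromRel (fun u v =>
    (u.val = 0 ∧ v.val = 1) ∨ (u.val = 0 ∧ v.val = 2) ∨ (u.val = 1 ∧ v.val = 2) ∨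
    (2 ≤ u.val ∧ u.val ≤ j + 1 ∧ v.val = u.val + 1) ∨
    (u.val = j + 2 ∧ j + 3 ≤ v.val ∧ v.val < j + 3 + a) ∨
    (u.val = 0 ∧ j + 3 + a ≤ v.val ∧ v.val < j + 3 + a + b) ∨
    (u.val = 1 ∧ j + 3 + a + b ≤ v.val))

/-- `G4Graph a c j` : a 4-cycle on vertices `0,1,2,3`, a path with `j` edges attached to
vertex `3` (vertices `3,4,…,j+3`), `a` pendant vertices attached to the far endpoint `j+3`
of the path, and `c` pendant vertices attached to vertex `1` (opposite to `3`). -/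
def G4Graph (a c j : ℕ) : SimpleGraph (Fin (a + c + j + 4)) :=
  SimpleGraph.fromRel (fun u v =>
    (u.val = 0 ∧ v.val = 1) ∨ (u.val = 1 ∧ v.val = 2) ∨ (u.val = 2 ∧ v.val = 3) ∨
    (u.val = 0 ∧ v.val = 3) ∨
    (3 ≤ u.val ∧ u.val ≤ j + 2 ∧ v.val = u.val + 1) ∨
    (u.val = j + 3 ∧ j + 4 ≤ v.val ∧ v.val < j + 4 + a) ∨
    (u.val = 1 ∧ j + 4 + a ≤ v.val))


set_option linter.unusedSectionVars false
set_option maxHeartbeats 1600000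
open scoped Classical

section WienerAux

variable {V : Type*} [Fintype V] {G : SimpleGraph V}

/-- A vertex with two distinct neighbours. -/
def TwoNbrs (G : SimpleGraph V) (v : V) : Prop :=
  ∃ w₁ w₂, w₁ ≠ w₂ ∧ G.Adj v w₁ ∧ G.Adj v w₂

lemma aux_sep_le_dist (hconn : G.Connected) (u v : V) :
    (G.edgeFinset.filter (fun e => ¬ (G.deleteEdges {e}).Reachable u v)).card ≤ G.dist u v := by
  obtain ⟨p, hp⟩ := (hconn u v).exists_walk_length_eq_dist
  calc (G.edgeFinset.filter (fun e => ¬ (G.deleteEdges {e}).Reachable u v)).card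
      ≤ p.edges.toFinset.card := by
        apply Finset.card_le_card
        intro e he
        simp only [Finset.mem_filter] at he
        rw [List.mem_toFinset]
        by_contra hnot
        exact he.2 ⟨p.toDeleteEdges {e} (by intro f hf hf'; simp at hf'; exact hnot (hf' ▸ hf))⟩
    _ ≤ p.edges.length := p.edges.toFinset_card_le
    _ = p.length := p.length_edges
    _ = G.dist u v := hp

lemma aux_not_reach (ht : G.IsTree) {a b : V} (hab : G.Adj a b) :
    ¬ (G.deleteEdges {s(a,b)}).Reachable a b := by
  intro hr
  obtain ⟨q0⟩ := hr.symm
  let q := q0.toPath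
  have hq : ∀ e ∈ (q : (G.deleteEdges {s(a,b)}).Walk b a).edges, e ∈ G.edgeSet := by
    intro e he
    have := (q : (G.deleteEdges {s(a,b)}).Walk b a).edges_subset_edgeSet he
    rw [G.edgeSet_deleteEdges] at this
    exact this.1
  have hne : s(a,b) ∉ (q : (G.deleteEdges {s(a,b)}).Walk b a).edges := by
    intro he
    have := (q : (G.deleteEdges {s(a,b)}).Walk b a).edges_subset_edgeSet he
    rw [G.edgeSet_deleteEdges] at this
    simp at this
  have hcyc : (SimpleGraph.Walk.cons hab
      ((q : (G.deleteEdges {s(a,b)}).Walk b a).transfer G hq)).IsCycle := by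
    rw [SimpleGraph.Walk.cons_isCycle_iff]
    constructor
    · exact q.2.transfer hq
    · rw [SimpleGraph.Walk.edges_transfer]
      exact hne
  exact ht.IsAcyclic _ hcyc

lemma aux_side (ht : G.IsTree) {a b : V} (hab : G.Adj a b) (v : V) :
    (G.deleteEdges {s(a,b)}).Reachable v a ∨ (G.deleteEdges {s(a,b)}).Reachable v b := by
  obtain ⟨p0⟩ := ht.isConnected v a
  let p := p0.toPath
  by_cases he : s(a,b) ∈ (p : G.Walk v a).edges
  · right
    have hb : b ∈ (p : G.Walk v a).support :=
      SimpleGraph.Walk.snd_mem_support_of_mem_edges _ he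
    set q := (p : G.Walk v a).takeUntil b hb with hqdef
    have hspec := (p : G.Walk v a).take_spec hb
    have hnd : ((p : G.Walk v a).support).Nodup := p.2.support_nodup
    have ha' : a ∉ q.support := by
      intro haq
      set r := (p : G.Walk v a).dropUntil b hb with hrdef
      have hsupp : (p : G.Walk v a).support = q.support ++ r.support.tail := by
        rw [← hspec]; exact SimpleGraph.Walk.support_append _ _
      rw [hsupp] at hnd
      have hdisj := List.disjoint_of_nodup_append hnd
      have har : a ∈ r.support.tail := by
        have : a ∈ r.support := r.end_mem_support
        rw [r.support_eq_cons, List.mem_cons] at this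
        rcases this with h | h
        · exact absurd h hab.ne
        · exact h
      exact hdisj haq har
    refine ⟨q.toDeleteEdges {s(a,b)} ?_⟩
    intro f hf hf'
    simp only [Set.mem_singleton_iff] at hf'
    subst hf'
    exact ha' (SimpleGraph.Walk.fst_mem_support_of_mem_edges _ hf)
  · left
    refine ⟨(p : G.Walk v a).toDeleteEdges {s(a,b)} ?_⟩
    intro f hf hf'
    simp only [Set.mem_singleton_iff] at hf'
    exact he (hf' ▸ hf)

lemma aux_pairs (ht : G.IsTree) {a b : V} (hab : G.Adj a b) :
    2 * ((univ.filter (fun v => (G.deleteEdges {s(a,b)}).Reachable v a)).card *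
         (univ.filter (fun v => (G.deleteEdges {s(a,b)}).Reachable v b)).card)
      ≤ ((univ ×ˢ univ).filter
          (fun p : V × V => ¬ (G.deleteEdges {s(a,b)}).Reachable p.1 p.2)).card := by
  set H := G.deleteEdges {s(a,b)} with hH
  set A := univ.filter (fun v => H.Reachable v a) with hA
  set B := univ.filter (fun v => H.Reachable v b) with hB
  have hmemA : ∀ v, v ∈ A ↔ H.Reachable v a := by intro v; simp [hA]
  have hmemB : ∀ v, v ∈ B ↔ H.Reachable v b := by intro v; simp [hB]
  have hdisj : Disjoint A B := by
    rw [Finset.disjoint_left]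
    intro v hvA hvB
    exact aux_not_reach ht hab (((hmemA v).1 hvA).symm.trans ((hmemB v).1 hvB))
  have hsub : (A ×ˢ B) ∪ (B ×ˢ A) ⊆ (univ ×ˢ univ).filter
      (fun p : V × V => ¬ H.Reachable p.1 p.2) := by
    intro ⟨u, w⟩ hu
    simp only [Finset.mem_union, Finset.mem_product] at hu
    rw [Finset.mem_filter]
    refine ⟨by simp, ?_⟩
    intro hr
    rcases hu with ⟨h1, h2⟩ | ⟨h1, h2⟩
    · exact aux_not_reach ht hab (((hmemA u).1 h1).symm.trans (hr.trans ((hmemB w).1 h2)))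
    · exact aux_not_reach ht hab (((hmemA w).1 h2).symm.trans (hr.symm.trans ((hmemB u).1 h1)))
  have hd2 : Disjoint (A ×ˢ B) (B ×ˢ A) := by
    rw [Finset.disjoint_left]
    intro ⟨u, w⟩ h1 h2
    simp only [Finset.mem_product] at h1 h2
    exact Finset.disjoint_left.1 hdisj h1.1 h2.1
  calc 2 * (A.card * B.card) = (A ×ˢ B).card + (B ×ˢ A).card := by
        rw [Finset.card_product, Finset.card_product]; ring
    _ = ((A ×ˢ B) ∪ (B ×ˢ A)).card := (Finset.card_union_of_disjoint hd2).symm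
    _ ≤ _ := Finset.card_le_card hsub

lemma aux_card_split (ht : G.IsTree) {a b : V} (hab : G.Adj a b) :
    (univ.filter (fun v => (G.deleteEdges {s(a,b)}).Reachable v a)).card +
    (univ.filter (fun v => (G.deleteEdges {s(a,b)}).Reachable v b)).card = Fintype.card V := by
  set H := G.deleteEdges {s(a,b)} with hH
  set A := univ.filter (fun v => H.Reachable v a) with hA
  set B := univ.filter (fun v => H.Reachable v b) with hB
  have hdisj : Disjoint A B := by
    rw [Finset.disjoint_left]
    intro v hvA hvB
    simp only [hA, hB, Finset.mem_filter] at hvA hvB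
    exact aux_not_reach ht hab (hvA.2.symm.trans hvB.2)
  have hun : A ∪ B = univ := by
    apply Finset.eq_univ_of_forall
    intro v
    rcases aux_side ht hab v with h | h
    · exact Finset.mem_union_left _ (by simp [hA]; exact h)
    · exact Finset.mem_union_right _ (by simp [hB]; exact h)
  rw [← Finset.card_union_of_disjoint hdisj, hun, Finset.card_univ]

lemma aux_mem_side {a b c : V} (hac : G.Adj a c) (hcb : c ≠ b) :
    c ∈ univ.filter (fun v => (G.deleteEdges {s(a,b)}).Reachable v a) := by
  simp only [Finset.mem_filter, Finset.mem_univ, true_and]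
  refine SimpleGraph.Adj.reachable ?_
  rw [SimpleGraph.deleteEdges_adj]
  refine ⟨hac.symm, ?_⟩
  simp only [Set.mem_singleton_iff, Sym2.eq_iff]
  rintro (⟨h1, -⟩ | ⟨h1, -⟩)
  · exact hac.ne' h1
  · exact hcb h1

lemma aux_side_one (ht : G.IsTree) {a b : V} (hab : G.Adj a b) :
    1 ≤ (univ.filter (fun v => (G.deleteEdges {s(a,b)}).Reachable v a)).card := by
  refine Finset.card_pos.2 ⟨a, ?_⟩
  simp only [Finset.mem_filter, Finset.mem_univ, true_and]
  exact SimpleGraph.Reachable.refl _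

lemma aux_side_two (ht : G.IsTree) {a b : V} (hab : G.Adj a b) (h2 : TwoNbrs G a) :
    2 ≤ (univ.filter (fun v => (G.deleteEdges {s(a,b)}).Reachable v a)).card := by
  obtain ⟨w₁, w₂, hne, h1, h2⟩ := h2
  have : ∃ c, c ≠ b ∧ G.Adj a c := by
    by_cases hw : w₁ = b
    · exact ⟨w₂, by rw [← hw]; exact fun h => hne h.symm, h2⟩
    · exact ⟨w₁, hw, h1⟩
  obtain ⟨c, hcb, hac⟩ := this
  refine Finset.one_lt_card.2 ⟨a, ?_, c, aux_mem_side hac hcb, hac.ne⟩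
  simp only [Finset.mem_filter, Finset.mem_univ, true_and]
  exact SimpleGraph.Reachable.refl _

lemma aux_bound (ht : G.IsTree) {a b : V} (hab : G.Adj a b) :
    2 * Fintype.card V ≤ ((univ ×ˢ univ).filter
      (fun p : V × V => ¬ (G.deleteEdges {s(a,b)}).Reachable p.1 p.2)).card + 2 := by
  have h1 := aux_side_one ht hab
  have h2 := aux_side_one ht hab.symm
  have hsplit := aux_card_split ht hab
  rw [show s(b,a) = s(a,b) from Sym2.eq_swap] at h2
  have hp := aux_pairs ht hab
  set α := (univ.filter (fun v => (G.deleteEdges {s(a,b)}).Reachable v a)).card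
  set β := (univ.filter (fun v => (G.deleteEdges {s(a,b)}).Reachable v b)).card
  nlinarith [hp, h1, h2, hsplit]

lemma aux_bound_int (ht : G.IsTree) {a b : V} (hab : G.Adj a b)
    (ha : TwoNbrs G a) (hb : TwoNbrs G b) :
    4 * Fintype.card V ≤ ((univ ×ˢ univ).filter
      (fun p : V × V => ¬ (G.deleteEdges {s(a,b)}).Reachable p.1 p.2)).card + 8 := by
  have h1 := aux_side_two ht hab ha
  have h2 := aux_side_two ht hab.symm hb
  have hsplit := aux_card_split ht hab
  rw [show s(b,a) = s(a,b) from Sym2.eq_swap] at h2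
  have hp := aux_pairs ht hab
  set α := (univ.filter (fun v => (G.deleteEdges {s(a,b)}).Reachable v a)).card
  set β := (univ.filter (fun v => (G.deleteEdges {s(a,b)}).Reachable v b)).card
  nlinarith [hp, h1, h2, hsplit]

lemma aux_closed {S : Set V} (hS : ∀ x ∈ S, ∀ y, G.Adj x y → y ∈ S) {u v : V}
    (p : G.Walk u v) (hu : u ∈ S) : v ∈ S := by
  induction p with
  | nil => exact hu
  | cons h p ih => exact ih (hS _ hu _ h)

lemma aux_two_nbrs (ht : G.Connected) (hn : 3 ≤ Fintype.card V) {a b : V} (hab : G.Adj a b) :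
    TwoNbrs G a ∨ TwoNbrs G b := by
  by_contra h
  push_neg at h
  obtain ⟨h1, h2⟩ := h
  have hSa : ∀ y, G.Adj a y → y = b := by
    intro y hy
    by_contra hne
    exact h1 ⟨y, b, hne, hy, hab⟩
  have hSb : ∀ y, G.Adj b y → y = a := by
    intro y hy
    by_contra hne
    exact h2 ⟨y, a, hne, hy, hab.symm⟩
  have hc : ∃ c : V, c ≠ a ∧ c ≠ b := by
    by_contra hc
    push_neg at hc
    have : (univ : Finset V) ⊆ {a, b} := by
      intro x _
      rcases Classical.em (x = a) with h | h
      · simp [h]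
      · simp [hc x h]
    have := Finset.card_le_card this
    rw [Finset.card_univ] at this
    have h2 : ({a, b} : Finset V).card ≤ 2 := Finset.card_insert_le _ _ |>.trans (by simp)
    omega
  obtain ⟨c, hca, hcb⟩ := hc
  obtain ⟨p⟩ := ht a c
  have : c ∈ ({a, b} : Set V) := by
    refine aux_closed ?_ p (by simp)
    rintro x (rfl | rfl) y hy
    · exact Or.inr (hSa y hy)
    · exact Or.inl (hSb y hy)
  rcases this with h | h
  · exact hca h
  · exact hcb h

lemma aux_matching_le (ht : G.Connected) (hn : 3 ≤ Fintype.card V)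
    (M : G.Subgraph) (hM : M.IsMatching) :
    M.edgeSet.ncard ≤ (univ.filter (fun v => TwoNbrs G v)).card := by
  have hfin : M.edgeSet.Finite := Set.toFinite _
  rw [Set.ncard_eq_toFinset_card' ]
  have hne : Nonempty V := Fintype.card_pos_iff.1 (by omega)
  set f : Sym2 V → V := fun e =>
    if h : ∃ v, v ∈ e ∧ TwoNbrs G v then h.choose else hne.some with hf
  apply Finset.card_le_card_of_injOn f
  · intro e he
    rw [Finset.mem_coe, Set.mem_toFinset] at he
    have hex : ∃ v, v ∈ e ∧ TwoNbrs G v := by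
      induction e using Sym2.ind with
      | _ a b =>
        have hadj : G.Adj a b := M.adj_sub (SimpleGraph.Subgraph.mem_edgeSet.1 he)
        rcases aux_two_nbrs ht hn hadj with h | h
        · exact ⟨a, by simp, h⟩
        · exact ⟨b, by simp, h⟩
    simp only [hf, dif_pos hex, Finset.mem_coe, Finset.mem_filter, Finset.mem_univ, true_and]
    exact hex.choose_spec.2
  · intro e1 he1 e2 he2 heq
    rw [Finset.mem_coe, Set.mem_toFinset] at he1 he2
    have hex1 : ∃ v, v ∈ e1 ∧ TwoNbrs G v := by
      induction e1 using Sym2.ind with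
      | _ a b =>
        have hadj : G.Adj a b := M.adj_sub (SimpleGraph.Subgraph.mem_edgeSet.1 he1)
        rcases aux_two_nbrs ht hn hadj with h | h
        · exact ⟨a, by simp, h⟩
        · exact ⟨b, by simp, h⟩
    have hex2 : ∃ v, v ∈ e2 ∧ TwoNbrs G v := by
      induction e2 using Sym2.ind with
      | _ a b =>
        have hadj : G.Adj a b := M.adj_sub (SimpleGraph.Subgraph.mem_edgeSet.1 he2)
        rcases aux_two_nbrs ht hn hadj with h | h
        · exact ⟨a, by simp, h⟩
        · exact ⟨b, by simp, h⟩
    rw [hf] at heq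
    simp only [dif_pos hex1, dif_pos hex2] at heq
    set v := hex1.choose with hv
    have hv1 : v ∈ e1 := hex1.choose_spec.1
    have hv2 : v ∈ e2 := by rw [heq]; exact hex2.choose_spec.1
    have ho1 : s(v, Sym2.Mem.other hv1) = e1 := Sym2.other_spec hv1
    have ho2 : s(v, Sym2.Mem.other hv2) = e2 := Sym2.other_spec hv2
    have hM1 : M.Adj v (Sym2.Mem.other hv1) := by
      rw [← SimpleGraph.Subgraph.mem_edgeSet, ho1]; exact he1
    have hM2 : M.Adj v (Sym2.Mem.other hv2) := by
      rw [← SimpleGraph.Subgraph.mem_edgeSet, ho2]; exact he2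
    obtain ⟨w, -, hw⟩ := hM (M.edge_vert hM1)
    rw [← ho1, ← ho2, hw _ hM1, hw _ hM2]

lemma aux_swap (hconn : G.Connected) :
    ∑ e ∈ G.edgeFinset, ((univ ×ˢ univ).filter
        (fun p : V × V => ¬ (G.deleteEdges {e}).Reachable p.1 p.2)).card
      ≤ ∑ u : V, ∑ v : V, G.dist u v := by
  have h1 : ∀ e : Sym2 V, ((univ ×ˢ univ).filter
      (fun p : V × V => ¬ (G.deleteEdges {e}).Reachable p.1 p.2)).card
      = ∑ u : V, ∑ v : V, if ¬ (G.deleteEdges {e}).Reachable u v then 1 else 0 := by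
    intro e
    rw [Finset.card_filter, Finset.sum_product]
  calc ∑ e ∈ G.edgeFinset, ((univ ×ˢ univ).filter
        (fun p : V × V => ¬ (G.deleteEdges {e}).Reachable p.1 p.2)).card
      = ∑ e ∈ G.edgeFinset, ∑ u : V, ∑ v : V,
          if ¬ (G.deleteEdges {e}).Reachable u v then 1 else 0 := by
        exact Finset.sum_congr rfl fun e _ => h1 e
    _ = ∑ u : V, ∑ v : V, ∑ e ∈ G.edgeFinset,
          (if ¬ (G.deleteEdges {e}).Reachable u v then 1 else 0) := by
        rw [Finset.sum_comm]
        exact Finset.sum_congr rfl fun u _ => Finset.sum_comm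
    _ = ∑ u : V, ∑ v : V,
          (G.edgeFinset.filter (fun e => ¬ (G.deleteEdges {e}).Reachable u v)).card := by
        exact Finset.sum_congr rfl fun u _ => Finset.sum_congr rfl fun v _ =>
          (Finset.card_filter _ _).symm
    _ ≤ ∑ u : V, ∑ v : V, G.dist u v := by
        exact Finset.sum_le_sum fun u _ => Finset.sum_le_sum fun v _ =>
          aux_sep_le_dist hconn u v

lemma aux_four (M : G.Subgraph) (hM : M.IsMatching) (h2 : 2 ≤ M.edgeSet.ncard) :
    4 ≤ Fintype.card V := by
  rw [Set.ncard_eq_toFinset_card'] at h2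
  obtain ⟨e1, he1, e2, he2, hne⟩ := Finset.one_lt_card.1 h2
  rw [Set.mem_toFinset] at he1 he2
  induction e1 using Sym2.ind with
  | _ a b =>
  induction e2 using Sym2.ind with
  | _ c d =>
  have hab : M.Adj a b := SimpleGraph.Subgraph.mem_edgeSet.1 he1
  have hcd : M.Adj c d := SimpleGraph.Subgraph.mem_edgeSet.1 he2
  have hab' : a ≠ b := (M.adj_sub hab).ne
  have hcd' : c ≠ d := (M.adj_sub hcd).ne
  obtain ⟨w, -, hwa⟩ := hM (M.edge_vert hab)
  obtain ⟨w', -, hwb⟩ := hM (M.edge_vert hab.symm)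
  have hac : a ≠ c := by
    rintro rfl
    obtain rfl : b = d := by rw [hwa _ hab, hwa _ hcd]
    exact hne rfl
  have had : a ≠ d := by
    rintro rfl
    have : b = c := by rw [hwa _ hab, hwa _ hcd.symm]
    subst this
    exact hne (Sym2.eq_swap)
  have hbc : b ≠ c := by
    rintro rfl
    have : a = d := by rw [hwb _ hab.symm, hwb _ hcd]
    subst this
    exact hne (Sym2.eq_swap)
  have hbd : b ≠ d := by
    rintro rfl
    have : a = c := by rw [hwb _ hab.symm, hwb _ hcd.symm]
    subst this
    exact hne rfl
  have h4 : ({a, b, c, d} : Finset V).card = 4 := by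
    have hm1 : a ∉ ({b, c, d} : Finset V) := by simp [hab', hac, had]
    have hm2 : b ∉ ({c, d} : Finset V) := by simp [hbc, hbd]
    rw [Finset.card_insert_of_notMem hm1, Finset.card_insert_of_notMem hm2,
      Finset.card_pair hcd']
  calc 4 = ({a, b, c, d} : Finset V).card := h4.symm
    _ ≤ Fintype.card V := Finset.card_le_univ _

lemma aux_nonint :
    (G.edgeFinset.filter (fun e => ¬ ∀ v ∈ e, TwoNbrs G v)).card +
      (univ.filter (fun v => TwoNbrs G v)).card ≤ Fintype.card V := by
  classical
  set K := univ.filter (fun v => TwoNbrs G v) with hK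
  set NI := G.edgeFinset.filter (fun e => ¬ ∀ v ∈ e, TwoNbrs G v) with hNI
  have hmain : NI.card ≤ (univ \ K).card := by
    have hex : ∀ e ∈ NI, ∃ v, v ∈ e ∧ ¬ TwoNbrs G v := by
      intro e he
      rw [hNI, Finset.mem_filter] at he
      push_neg at he
      obtain ⟨v, hv1, hv2⟩ := he.2
      exact ⟨v, hv1, hv2⟩
    by_cases hV : Nonempty V
    · set f : Sym2 V → V := fun e =>
        if h : ∃ v, v ∈ e ∧ ¬ TwoNbrs G v then h.choose else hV.some with hf
      apply Finset.card_le_card_of_injOn f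
      · intro e he
        have h := hex e he
        have hv := h.choose_spec.2
        simp only [hf, dif_pos h]
        rw [Finset.mem_coe, Finset.mem_sdiff]
        refine ⟨Finset.mem_univ _, ?_⟩
        rw [hK, Finset.mem_filter]
        rintro ⟨-, h2⟩
        exact hv h2
      · intro e1 he1 e2 he2 heq
        rw [Finset.mem_coe] at he1 he2
        have h1 := hex e1 he1
        have h2 := hex e2 he2
        rw [hf] at heq
        simp only [dif_pos h1, dif_pos h2] at heq
        have hv1 : h1.choose ∈ e1 := h1.choose_spec.1
        have hv2 : h1.choose ∈ e2 := by rw [heq]; exact h2.choose_spec.1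
        have hnt : ¬ TwoNbrs G h1.choose := h1.choose_spec.2
        have hge1 : e1 ∈ G.edgeSet := by
          have := Finset.mem_filter.1 he1
          exact SimpleGraph.mem_edgeFinset.1 this.1
        have hge2 : e2 ∈ G.edgeSet := by
          have := Finset.mem_filter.1 he2
          exact SimpleGraph.mem_edgeFinset.1 this.1
        have ho1 : s(h1.choose, Sym2.Mem.other hv1) = e1 := Sym2.other_spec hv1
        have ho2 : s(h1.choose, Sym2.Mem.other hv2) = e2 := Sym2.other_spec hv2
        have hadj1 : G.Adj h1.choose (Sym2.Mem.other hv1) := by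
          rw [← SimpleGraph.mem_edgeSet, ho1]; exact hge1
        have hadj2 : G.Adj h1.choose (Sym2.Mem.other hv2) := by
          rw [← SimpleGraph.mem_edgeSet, ho2]; exact hge2
        have : Sym2.Mem.other hv1 = Sym2.Mem.other hv2 := by
          by_contra hcon
          exact hnt ⟨_, _, hcon, hadj1, hadj2⟩
        rw [← ho1, ← ho2, this]
    · have : NI = ∅ := by
        rw [Finset.eq_empty_iff_forall_notMem]
        intro e he
        obtain ⟨v, -, -⟩ := hex e he
        exact hV ⟨v⟩
      simp [this]
  have hsd : (univ \ K).card = Fintype.card V - K.card := by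
    rw [Finset.card_sdiff_of_subset (Finset.subset_univ _), Finset.card_univ]
  have hKle : K.card ≤ Fintype.card V := by
    rw [← Finset.card_univ]; exact Finset.card_le_univ _
  omega

end WienerAux

theorem stmt19 {V : Type*} [Fintype V] (G : SimpleGraph V) (n m : ℕ)
    (hcard : Fintype.card V = n) (htree : G.IsTree) (hm : matchingNumber G = m)
    (h1 : 2 ≤ m) (h2 : m ≤ n / 2) :
    (n:ℚ)^2 + ((m:ℚ) - 3) * (n:ℚ) - 3 * (m:ℚ) + 4 ≤ (wienerIndex G : ℚ) := by
  classical
  subst hcard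
  have hconn := htree.isConnected
  -- extract a maximum matching
  have hbdd : BddAbove {k : ℕ | ∃ M : G.Subgraph, M.IsMatching ∧ M.edgeSet.ncard = k} := by
    refine ⟨G.edgeSet.ncard, ?_⟩
    rintro k ⟨M, -, rfl⟩
    exact Set.ncard_le_ncard M.edgeSet_subset (Set.toFinite _)
  have h0 : 0 ∈ {k : ℕ | ∃ M : G.Subgraph, M.IsMatching ∧ M.edgeSet.ncard = k} := by
    refine ⟨⊥, ?_, by simp⟩
    intro v hv
    simp only [SimpleGraph.Subgraph.verts_bot, Set.mem_empty_iff_false] at hv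
  have hmem : m ∈ {k : ℕ | ∃ M : G.Subgraph, M.IsMatching ∧ M.edgeSet.ncard = k} := by
    rw [← hm]
    exact Nat.sSup_mem ⟨0, h0⟩ hbdd
  obtain ⟨M, hMmat, hMcard⟩ := hmem
  have hn4 : 4 ≤ Fintype.card V := aux_four M hMmat (by rw [hMcard]; exact h1)
  have hn3 : 3 ≤ Fintype.card V := by omega
  have hK : m ≤ (univ.filter (fun v => TwoNbrs G v)).card := by
    rw [← hMcard]
    exact aux_matching_le hconn hn3 M hMmat
  have hNI := aux_nonint (G := G)
  have hE : G.edgeFinset.card + 1 = Fintype.card V := htree.card_edgeFinset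
  set I := G.edgeFinset.filter (fun e => ∀ v ∈ e, TwoNbrs G v) with hIdef
  set NI := G.edgeFinset.filter (fun e => ¬ ∀ v ∈ e, TwoNbrs G v) with hNIdef
  have hIN : I.card + NI.card = G.edgeFinset.card :=
    Finset.card_filter_add_card_filter_not _
  set f : Sym2 V → ℕ := fun e => ((univ ×ˢ univ).filter
      (fun p : V × V => ¬ (G.deleteEdges {e}).Reachable p.1 p.2)).card with hfdef
  have hb1 : ∀ e ∈ NI, 2 * Fintype.card V - 2 ≤ f e := by
    intro e he
    rw [hNIdef, Finset.mem_filter] at he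
    have he' := SimpleGraph.mem_edgeFinset.1 he.1
    clear he
    induction e using Sym2.ind with
    | _ a b =>
      have hadj : G.Adj a b := he'
      have := aux_bound htree hadj
      simp only [hfdef]
      omega
  have hb2 : ∀ e ∈ I, 4 * Fintype.card V - 8 ≤ f e := by
    intro e he
    rw [hIdef, Finset.mem_filter] at he
    obtain ⟨he1, he2⟩ := he
    have he' := SimpleGraph.mem_edgeFinset.1 he1
    induction e using Sym2.ind with
    | _ a b =>
      have hadj : G.Adj a b := he'
      have hta : TwoNbrs G a := he2 a (Sym2.mem_mk_left a b)
      have htb : TwoNbrs G b := he2 b (Sym2.mem_mk_right a b)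
      have := aux_bound_int htree hadj hta htb
      simp only [hfdef]
      omega
  have hsplit : ∑ e ∈ I, f e + ∑ e ∈ NI, f e = ∑ e ∈ G.edgeFinset, f e :=
    Finset.sum_filter_add_sum_filter_not _ _ _
  have hge2 : I.card * (4 * Fintype.card V - 8) ≤ ∑ e ∈ I, f e := by
    simpa [mul_comm] using Finset.card_nsmul_le_sum I f _ hb2
  have hge1 : NI.card * (2 * Fintype.card V - 2) ≤ ∑ e ∈ NI, f e := by
    simpa [mul_comm] using Finset.card_nsmul_le_sum NI f _ hb1
  have hswap := aux_swap hconn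
  set S := ∑ u : V, ∑ v : V, G.dist u v with hSdef
  have hS : I.card * (4 * Fintype.card V - 8) + NI.card * (2 * Fintype.card V - 2) ≤ S := by
    calc I.card * (4 * Fintype.card V - 8) + NI.card * (2 * Fintype.card V - 2)
        ≤ ∑ e ∈ I, f e + ∑ e ∈ NI, f e := Nat.add_le_add hge2 hge1
      _ = ∑ e ∈ G.edgeFinset, f e := hsplit
      _ ≤ S := hswap
  -- numeric bookkeeping
  obtain ⟨n₀, hn₀⟩ := Nat.exists_eq_add_of_le hn4
  obtain ⟨m₀, hm₀⟩ := Nat.exists_eq_add_of_le h1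
  set i := I.card with hi
  set q := NI.card with hq
  have hiq : i + q + 1 = 4 + n₀ := by omega
  have him : m₀ + 1 ≤ i := by
    have hKle : (univ.filter (fun v => TwoNbrs G v)).card ≤ Fintype.card V := by
      rw [← Finset.card_univ]; exact Finset.card_le_univ _
    omega
  have e1 : 4 * Fintype.card V - 8 = 8 + 4 * n₀ := by omega
  have e2 : 2 * Fintype.card V - 2 = 6 + 2 * n₀ := by omega
  rw [e1, e2] at hS
  set c := i * (4 + 2 * n₀) + q * (3 + n₀) with hc
  have hc2 : c * 2 ≤ S := by
    calc c * 2 = i * (8 + 4 * n₀) + q * (6 + 2 * n₀) := by rw [hc]; ring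
      _ ≤ S := hS
  have hW : c ≤ wienerIndex G := by
    rw [wienerIndex]
    rw [Nat.le_div_iff_mul_le (by norm_num : 0 < 2)]
    exact hc2
  have hWq : (c : ℚ) ≤ (wienerIndex G : ℚ) := by exact_mod_cast hW
  refine le_trans ?_ hWq
  rw [hn₀, hm₀, hc]
  have hiqQ : (i : ℚ) + (q : ℚ) = 3 + (n₀ : ℚ) := by
    have : i + q = 3 + n₀ := by omega
    exact_mod_cast this
  have himQ : (m₀ : ℚ) + 1 ≤ (i : ℚ) := by exact_mod_cast him
  push_cast
  nlinarith [mul_nonneg (sub_nonneg.2 himQ) (by positivity : (0:ℚ) ≤ (n₀ : ℚ) + 1), hiqQ]
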